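/- Let φ : ℝ^n × ℝ^d → ℝ^n be λ-contractive in its state argument with λ < 1, be L_x-Lipschitz in its input argument, and satisfy φ(0, 0) = 0, and let f : ℝ^n → ℝ^p be L_f-Lipschitz. Let inputs x_1, …, x_T satisfy ‖x_t‖ ≤ B_x, let h_t and h_t^k be the full and truncated hidden states, and let y_t = f(h_t), y_t^k = f(h_t^k). Then for any ε > 0, if the truncation length satisfies k ≥ log_{1/λ}(L_f L_x B_x / ((1 − λ)ε)), then ‖y_t − y_t^k‖ ≤ ε for all t ≥ k. -/

import Mathlib

/-- inference-time approximation. If `φ` is `λ`-contractive in the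
state (`0 < λ < 1`), `L_x`-Lipschitz in the input, `φ(0,0) = 0`, the prediction
map `f` is `L_f`-Lipschitz, inputs are bounded by `B_x`, and the truncation
length satisfies `k ≥ log_{1/λ}(L_f L_x B_x/((1 − λ)ε))`, then the full and
truncated predictions satisfy `‖y_t − y_t^k‖ ≤ ε` (for `t ≥ k`). -/
theorem stmt_8 (n d p T k t : ℕ) (lam Lx Bx Lf : ℝ)
    (hlam0 : 0 < lam) (hlam1 : lam < 1) (hLx : 0 ≤ Lx) (hBx : 0 ≤ Bx) (hLf : 0 ≤ Lf)
    (φ : EuclideanSpace ℝ (Fin n) → EuclideanSpace ℝ (Fin d) → EuclideanSpace ℝ (Fin n))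
    (hcontract : ∀ h h' x, ‖φ h x - φ h' x‖ ≤ lam * ‖h - h'‖)
    (hlip : ∀ h x x', ‖φ h x - φ h x'‖ ≤ Lx * ‖x - x'‖)
    (hzero : φ 0 0 = 0)
    (f : EuclideanSpace ℝ (Fin n) → EuclideanSpace ℝ (Fin p))
    (hf : ∀ h h', ‖f h - f h'‖ ≤ Lf * ‖h - h'‖)
    (x : ℕ → EuclideanSpace ℝ (Fin d)) (hx : ∀ s, 1 ≤ s → s ≤ T → ‖x s‖ ≤ Bx)
    (h : ℕ → EuclideanSpace ℝ (Fin n)) (h0 : h 0 = 0)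
    (hrec : ∀ s, s < T → h (s + 1) = φ (h s) (x (s + 1)))
    (hk : ℕ → EuclideanSpace ℝ (Fin n)) (hkt : k ≤ t) (htT : t ≤ T)
    (hk0 : hk (t - k) = 0)
    (hkrec : ∀ s, t - k ≤ s → s < t → hk (s + 1) = φ (hk s) (x (s + 1)))
    (ε : ℝ) (hε : 0 < ε)
    (hklarge : (k : ℝ) ≥ Real.logb (1 / lam) (Lf * Lx * Bx / ((1 - lam) * ε))) :
    ‖f (h t) - f (hk t)‖ ≤ ε := by
  have h1lam : (0:ℝ) < 1 - lam := by linarith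
  set C : ℝ := Lx * Bx / (1 - lam) with hC
  have hC0 : 0 ≤ C := by positivity
  have hCeq : lam * C + Lx * Bx = C := by
    rw [hC]; field_simp; ring
  -- bound on hidden states
  have hbound : ∀ s, s ≤ T → ‖h s‖ ≤ C := by
    intro s
    induction s with
    | zero => intro _; simp [h0, hC0]
    | succ s ih =>
      intro hsT
      have hsT' : s < T := by omega
      rw [hrec s hsT']
      have e1 : ‖φ (h s) (x (s+1)) - φ 0 (x (s+1))‖ ≤ lam * ‖h s - 0‖ :=
        hcontract _ _ _
      have e2 : ‖φ 0 (x (s+1)) - φ 0 0‖ ≤ Lx * ‖x (s+1) - 0‖ := hlip _ _ _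
      have e3 : ‖x (s+1)‖ ≤ Bx := hx (s+1) (by omega) (by omega)
      have hs : ‖h s‖ ≤ C := ih (by omega)
      calc ‖φ (h s) (x (s+1))‖
          ≤ ‖φ (h s) (x (s+1)) - φ 0 (x (s+1))‖ + ‖φ 0 (x (s+1)) - φ 0 0‖ + ‖φ 0 0‖ := by
            have := norm_sub_le_norm_sub_add_norm_sub (φ (h s) (x (s+1))) (φ 0 (x (s+1))) (φ 0 0)
            have h4 : ‖φ (h s) (x (s+1))‖ ≤ ‖φ (h s) (x (s+1)) - φ 0 0‖ + ‖φ 0 0‖ := by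
              have := norm_sub_norm_le (φ (h s) (x (s+1))) (φ 0 0)
              linarith [abs_le.mp (abs_norm_sub_norm_le (φ (h s) (x (s+1))) (φ 0 0))]
            linarith
        _ ≤ lam * ‖h s - 0‖ + Lx * ‖x (s+1) - 0‖ + 0 := by
            rw [hzero] at e2; rw [hzero, norm_zero]; linarith
        _ ≤ lam * C + Lx * Bx + 0 := by
            simp only [sub_zero]
            have := mul_le_mul_of_nonneg_left hs hlam0.le
            have := mul_le_mul_of_nonneg_left e3 hLx
            linarith
        _ = C := by rw [hCeq]; ring
  -- difference bound by induction
  have hdiff : ∀ j, t - k + j ≤ t → ‖h (t - k + j) - hk (t - k + j)‖ ≤ lam ^ j * C := by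
    intro j
    induction j with
    | zero =>
      intro _
      simp only [Nat.add_zero, hk0, sub_zero, pow_zero, one_mul]
      exact hbound _ (by omega)
    | succ j ih =>
      intro hj
      have hs : t - k + j < t := by omega
      have e1 := hrec (t - k + j) (by omega)
      have e2 := hkrec (t - k + j) (by omega) hs
      have : t - k + (j + 1) = (t - k + j) + 1 := by omega
      rw [this, e1, e2]
      calc ‖φ (h (t-k+j)) (x (t-k+j+1)) - φ (hk (t-k+j)) (x (t-k+j+1))‖
          ≤ lam * ‖h (t-k+j) - hk (t-k+j)‖ := hcontract _ _ _
        _ ≤ lam * (lam ^ j * C) := by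
            exact mul_le_mul_of_nonneg_left (ih (by omega)) hlam0.le
        _ = lam ^ (j+1) * C := by ring
  have hdk : ‖h t - hk t‖ ≤ lam ^ k * C := by
    have := hdiff k (by omega)
    rwa [Nat.sub_add_cancel hkt] at this
  have hfin : ‖f (h t) - f (hk t)‖ ≤ Lf * (lam ^ k * C) := by
    calc ‖f (h t) - f (hk t)‖ ≤ Lf * ‖h t - hk t‖ := hf _ _
      _ ≤ Lf * (lam ^ k * C) := mul_le_mul_of_nonneg_left hdk hLf
  have hpow : 0 < lam ^ k := pow_pos hlam0 k
  rcases eq_or_lt_of_le (by positivity : (0:ℝ) ≤ Lf * Lx * Bx) with hz | hgt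
  · -- product is zero
    have : Lf * (lam ^ k * C) = lam ^ k / (1 - lam) * (Lf * Lx * Bx) := by
      rw [hC]; field_simp
    rw [this, ← hz, mul_zero] at hfin
    linarith
  · -- positive case
    set M : ℝ := Lf * Lx * Bx / ((1 - lam) * ε) with hM
    have hM0 : 0 < M := by positivity
    have hb1 : 1 < 1 / lam := by rw [lt_div_iff₀ hlam0]; linarith
    have hb0 : (0:ℝ) < 1 / lam := by positivity
    have hMle : M ≤ (1 / lam) ^ k := by
      have h1 : (1/lam) ^ (Real.logb (1/lam) M) ≤ (1/lam) ^ (k:ℝ) := by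
        exact Real.rpow_le_rpow_left_iff (x := 1/lam) hb1 |>.mpr hklarge
      rw [Real.rpow_logb hb0 (ne_of_gt hb1) hM0] at h1
      rwa [Real.rpow_natCast] at h1
    have hlk : lam ^ k * M ≤ 1 := by
      have := mul_le_mul_of_nonneg_left hMle hpow.le
      calc lam ^ k * M ≤ lam ^ k * (1/lam) ^ k := this
        _ = 1 := by
          rw [one_div, inv_pow, mul_inv_cancel₀ (ne_of_gt hpow)]
    have key : Lf * (lam ^ k * C) = lam ^ k * M * ε := by
      rw [hC, hM]; field_simp
    rw [key] at hfin
    have : lam ^ k * M * ε ≤ 1 * ε := mul_le_mul_of_nonneg_right hlk hε.le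
    linarith
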